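/- If the edges of a graph G can be partitioned into m edge-disjoint complete bipartite subgraphs, then there exists a graph Γ on m vertices such that the nondeterministic 0-communication complexity of the clique vs. independent set problem on Γ satisfies N⁰(CL-IS_Γ) ≥ log₂ χ(G). -/

import Mathlib

/-- `crossAdj U W u v` : `u` and `v` are on opposite sides of the biclique `B(U,W)`. -/
def crossAdj {V : Type*} (U W : Set V) (u v : V) : Prop :=
  (u ∈ U ∧ v ∈ W) ∨ (u ∈ W ∧ v ∈ U)

/-- `B` is a partition of the edge set of `G` into `k` complete bipartite graphs:
every cross pair of each biclique is an edge of `G`, and every edge of `G` lies in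
exactly one of the bicliques. -/
def IsBicliquePartition {V : Type*} (G : SimpleGraph V) {k : ℕ}
    (B : Fin k → Set V × Set V) : Prop :=
  (∀ i, Disjoint (B i).1 (B i).2) ∧
  (∀ i, ∀ u v, crossAdj (B i).1 (B i).2 u v → G.Adj u v) ∧
  (∀ u v, G.Adj u v → ∃! i, crossAdj (B i).1 (B i).2 u v)

/-- `s` is an independent set of the graph `G`. -/
def IsIndepSet' {V : Type*} (G : SimpleGraph V) (s : Set V) : Prop :=
  ∀ ⦃u⦄, u ∈ s → ∀ ⦃v⦄, v ∈ s → u ≠ v → ¬ G.Adj u v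


/-- `R` is a covering of the 0-entries of the clique vs. independent set communication
matrix of `G` by (all-zero) monochromatic combinatorial rectangles: each rectangle
consists only of pairs `(C, I)` with `C ∩ I = ∅`, and every pair (clique, independent set)
with empty intersection belongs to some rectangle. -/
def IsCISZeroCover {V : Type*} [DecidableEq V] (G : SimpleGraph V) {k : ℕ}
    (R : Fin k → Set (Finset V) × Set (Finset V)) : Prop :=
  (∀ i, ∀ C ∈ (R i).1, ∀ I ∈ (R i).2, C ∩ I = ∅) ∧
  (∀ C I : Finset V, G.IsClique ↑C → IsIndepSet' G ↑I → C ∩ I = ∅ →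
      ∃ i, C ∈ (R i).1 ∧ I ∈ (R i).2)

/-- `C⁰(CL-IS_G)`: the minimum number of all-zero rectangles needed to cover the
0-entries of the clique vs. independent set communication matrix of `G`. -/
noncomputable def C0 {V : Type*} [DecidableEq V] (G : SimpleGraph V) : ℕ :=
  sInf {k | ∃ R : Fin k → Set (Finset V) × Set (Finset V), IsCISZeroCover G R}

/-- The nondeterministic communication complexity `N⁰(CL-IS_G) = ⌈log₂ C⁰(CL-IS_G)⌉`. -/
noncomputable def N0 {V : Type*} [DecidableEq V] (G : SimpleGraph V) : ℕ :=
  Nat.clog 2 (C0 G)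

/-- If the edges of `G` can be partitioned into `m` complete bipartite graphs, then there
is a graph `Γ` on `m` vertices with `N⁰(CL-IS_Γ) ≥ log₂ χ(G)`. -/
theorem exists_graph_N0_ge_log_chromatic (n m : ℕ) (G : SimpleGraph (Fin n))
    (B : Fin m → Set (Fin n) × Set (Fin n)) (hB : IsBicliquePartition G B) :
    ∃ Γ : SimpleGraph (Fin m),
      Real.logb 2 (G.chromaticNumber.toNat : ℝ) ≤ (N0 Γ : ℝ) := by
  classical
  obtain ⟨hdisj, hcross, huniq⟩ := hB
  set Γ : SimpleGraph (Fin m) :=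
    { Adj := fun i i' => i ≠ i' ∧ ∃ j, j ∈ (B i).2 ∧ j ∈ (B i').2
      symm := ⟨by rintro i i' ⟨hne, j, h1, h2⟩; exact ⟨hne.symm, j, h2, h1⟩⟩
      loopless := ⟨fun i h => h.1 rfl⟩ } with hΓ
  refine ⟨Γ, ?_⟩
  set Cl : Fin n → Finset (Fin m) :=
    fun j => Finset.univ.filter (fun i => j ∈ (B i).2) with hCl
  set Is : Fin n → Finset (Fin m) :=
    fun j => Finset.univ.filter (fun i => j ∈ (B i).1) with hIs
  have hmemCl : ∀ j i, i ∈ Cl j ↔ j ∈ (B i).2 := by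
    intro j i; simp [hCl]
  have hmemIs : ∀ j i, i ∈ Is j ↔ j ∈ (B i).1 := by
    intro j i; simp [hIs]
  have hClique : ∀ j, Γ.IsClique ↑(Cl j) := by
    intro j i hi i' hi' hne
    exact ⟨hne, j, (hmemCl j i).1 hi, (hmemCl j i').1 hi'⟩
  have hIndep : ∀ j, IsIndepSet' Γ ↑(Is j) := by
    intro j i hi i' hi' hne hadj
    obtain ⟨-, j', hj1, hj2⟩ := hadj
    have h1 : crossAdj (B i).1 (B i).2 j j' := Or.inl ⟨(hmemIs j i).1 hi, hj1⟩
    have h2 : crossAdj (B i').1 (B i').2 j j' := Or.inl ⟨(hmemIs j i').1 hi', hj2⟩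
    have hadjG : G.Adj j j' := hcross i j j' h1
    obtain ⟨w, -, hw⟩ := huniq j j' hadjG
    exact hne ((hw i h1).trans (hw i' h2).symm)
  have hCI : ∀ j, Cl j ∩ Is j = ∅ := by
    intro j
    rw [Finset.eq_empty_iff_forall_notMem]
    intro i hi
    rw [Finset.mem_inter] at hi
    exact (hdisj i).ne_of_mem ((hmemIs j i).1 hi.2) ((hmemCl j i).1 hi.1) rfl
  -- any zero-cover of size k yields a proper k-coloring of G
  have hcol : ∀ k, (∃ R : Fin k → Set (Finset (Fin m)) × Set (Finset (Fin m)),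
      IsCISZeroCover Γ R) → G.Colorable k := by
    rintro k ⟨R, hR1, hR2⟩
    have hex : ∀ j, ∃ i, Cl j ∈ (R i).1 ∧ Is j ∈ (R i).2 := fun j =>
      hR2 (Cl j) (Is j) (hClique j) (hIndep j) (hCI j)
    refine ⟨SimpleGraph.Coloring.mk (fun j => (hex j).choose) ?_⟩
    intro u v hadj heq
    obtain ⟨i, hci, -⟩ := huniq u v hadj
    have hu := (hex u).choose_spec
    have hv := (hex v).choose_spec
    replace heq : (hex u).choose = (hex v).choose := heq
    rw [← heq] at hv
    rcases hci with ⟨hu1, hv2⟩ | ⟨hu2, hv1⟩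
    · -- u ∈ U_i, v ∈ W_i : i ∈ Is u ∩ Cl v
      have hz : Cl v ∩ Is u = ∅ := hR1 _ _ hv.1 _ hu.2
      have : i ∈ Cl v ∩ Is u :=
        Finset.mem_inter.2 ⟨(hmemCl v i).2 hv2, (hmemIs u i).2 hu1⟩
      simp [hz] at this
    · have hz : Cl u ∩ Is v = ∅ := hR1 _ _ hu.1 _ hv.2
      have : i ∈ Cl u ∩ Is v :=
        Finset.mem_inter.2 ⟨(hmemCl u i).2 hu2, (hmemIs v i).2 hv1⟩
      simp [hz] at this
  -- the set of cover sizes is nonempty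
  have hne : {k | ∃ R : Fin k → Set (Finset (Fin m)) × Set (Finset (Fin m)),
      IsCISZeroCover Γ R}.Nonempty := by
    classical
    set P := Finset (Fin m) × Finset (Fin m)
    refine ⟨Fintype.card P, ?_⟩
    obtain ⟨e⟩ := Fintype.truncEquivFin P
    refine ⟨fun i => if ((e.symm i).1 ∩ (e.symm i).2 = ∅) then
        ({(e.symm i).1}, {(e.symm i).2}) else (∅, ∅), ?_, ?_⟩
    · intro i C hC I hI
      by_cases h : (e.symm i).1 ∩ (e.symm i).2 = ∅
      · simp only [h, if_true] at hC hI
        rcases hC with rfl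
        rcases hI with rfl
        exact h
      · simp [h] at hC
    · intro C I hC hI hCI'
      refine ⟨e (C, I), ?_⟩
      simp [hCI']
  have hmem := Nat.sInf_mem hne
  have hχ : G.chromaticNumber.toNat ≤ C0 Γ := by
    have hc := (hcol _ hmem).chromaticNumber_le
    exact ENat.toNat_le_of_le_coe hc
  -- conclude the logarithmic inequality
  unfold N0
  have hle : (G.chromaticNumber.toNat : ℝ) ≤ (2 : ℝ) ^ (Nat.clog 2 (C0 Γ)) := by
    have h2 : C0 Γ ≤ 2 ^ Nat.clog 2 (C0 Γ) := Nat.le_pow_clog one_lt_two _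
    exact_mod_cast hχ.trans h2
  rcases Nat.eq_zero_or_pos G.chromaticNumber.toNat with h0 | hpos
  · rw [h0]; simp
  · have hpos' : (0:ℝ) < (G.chromaticNumber.toNat : ℝ) := by exact_mod_cast hpos
    have hlog := Real.logb_le_logb_of_le (b := 2) (by norm_num) hpos' hle
    calc Real.logb 2 (G.chromaticNumber.toNat : ℝ)
        ≤ Real.logb 2 ((2:ℝ) ^ (Nat.clog 2 (C0 Γ))) := hlog
      _ = (Nat.clog 2 (C0 Γ) : ℝ) := by
          rw [Real.logb_pow, Real.logb_self_eq_one (by norm_num : (1:ℝ)<2)]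
          ring
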